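/- For every subset D ⊆ [n−1], the descent class Des_L⁻¹(D) = {σ ∈ S_n : Des_L(σ) = D} is an interval in the right weak Bruhat order on S_n; that is, it has a minimum element m and a maximum element M, and it equals {σ : m ≤ σ ≤ M} in the weak order. -/

import Mathlib

/-- `u` is the one-line word of a permutation of `{1, …, n}`. -/
def IsPermWord (n : ℕ) (u : List ℕ) : Prop := u.Perm (List.range' 1 n)

/-- The left inversion set of a word `u`:
pairs `(i, j)` of letters of `u` with `i < j` such that `j` occurs before `i` in `u`
(i.e. `u⁻¹(i) > u⁻¹(j)`). -/
def InvW (u : List ℕ) : Set (ℕ × ℕ) :=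
  {p | p.1 < p.2 ∧ p.1 ∈ u ∧ p.2 ∈ u ∧ u.idxOf p.2 < u.idxOf p.1}

/-- The left descent set of a word: letters `i` such that `i + 1` occurs before `i`. -/
def DesLW (u : List ℕ) : Set ℕ :=
  {i | i ∈ u ∧ i + 1 ∈ u ∧ u.idxOf (i + 1) < u.idxOf i}

/-- The covering relation of the right weak Bruhat order on one-line words:
`w = u · sᵢ` where the letters in positions `i, i+1` of `u` are increasing. -/
def WeakCovW (u w : List ℕ) : Prop :=
  ∃ (l₁ l₂ : List ℕ) (x y : ℕ), x < y ∧ u = l₁ ++ x :: y :: l₂ ∧ w = l₁ ++ y :: x :: l₂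

section DescentAux

open Classical

/-- The number of elements of `D` in `[1, k)`. -/
noncomputable def cD (D : Set ℕ) (k : ℕ) : ℕ := ((Finset.Ico 1 k).filter (· ∈ D)).card

/-- `k` minus the number of elements of `D` below `k`. -/
noncomputable def gD (D : Set ℕ) (k : ℕ) : ℕ := k - cD D k

lemma cD_lt (D : Set ℕ) {k : ℕ} (hk : 1 ≤ k) : cD D k < k := by
  have h1 : cD D k ≤ (Finset.Ico 1 k).card := Finset.card_filter_le _ _
  have h2 : (Finset.Ico 1 k).card = k - 1 := Nat.card_Ico 1 k
  omega

lemma cD_add (D : Set ℕ) {i j : ℕ} (hi : 1 ≤ i) (hij : i ≤ j) :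
    cD D j = cD D i + ((Finset.Ico i j).filter (· ∈ D)).card := by
  unfold cD
  rw [← Finset.Ico_union_Ico_eq_Ico hi hij, Finset.filter_union,
    Finset.card_union_of_disjoint]
  exact Finset.disjoint_filter_filter (Finset.Ico_disjoint_Ico_consecutive 1 i j)

lemma cD_mono (D : Set ℕ) {i j : ℕ} (hi : 1 ≤ i) (hij : i ≤ j) : cD D i ≤ cD D j := by
  rw [cD_add D hi hij]; omega

lemma cD_le_add (D : Set ℕ) {i j : ℕ} (hi : 1 ≤ i) (hij : i ≤ j) :
    cD D j ≤ cD D i + (j - i) := by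
  rw [cD_add D hi hij]
  have := Finset.card_filter_le (Finset.Ico i j) (· ∈ D)
  have h2 : (Finset.Ico i j).card = j - i := Nat.card_Ico i j
  omega

lemma cD_eq_iff (D : Set ℕ) {i j : ℕ} (hi : 1 ≤ i) (hij : i ≤ j) :
    cD D j = cD D i + (j - i) ↔ ∀ k, i ≤ k → k < j → k ∈ D := by
  rw [cD_add D hi hij]
  have h2 : (Finset.Ico i j).card = j - i := Nat.card_Ico i j
  constructor
  · intro h k hk1 hk2
    have hcard : ((Finset.Ico i j).filter (· ∈ D)).card = (Finset.Ico i j).card := by omega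
    exact Finset.filter_card_eq hcard k (Finset.mem_Ico.2 ⟨hk1, hk2⟩)
  · intro h
    have heq : (Finset.Ico i j).filter (· ∈ D) = Finset.Ico i j := by
      apply Finset.filter_eq_self.2
      intro k hk
      rcases Finset.mem_Ico.1 hk with ⟨h1, h2⟩
      exact h k h1 h2
    rw [heq]
    omega

lemma cD_lt_iff (D : Set ℕ) {i j : ℕ} (hi : 1 ≤ i) (hij : i ≤ j) :
    cD D i < cD D j ↔ ∃ k, i ≤ k ∧ k < j ∧ k ∈ D := by
  rw [cD_add D hi hij]
  constructor
  · intro h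
    have : 0 < ((Finset.Ico i j).filter (· ∈ D)).card := by omega
    rcases Finset.card_pos.1 this with ⟨k, hk⟩
    rcases Finset.mem_filter.1 hk with ⟨hk1, hk2⟩
    rcases Finset.mem_Ico.1 hk1 with ⟨h1, h2⟩
    exact ⟨k, h1, h2, hk2⟩
  · rintro ⟨k, h1, h2, h3⟩
    have hm : k ∈ (Finset.Ico i j).filter (· ∈ D) :=
      Finset.mem_filter.2 ⟨Finset.mem_Ico.2 ⟨h1, h2⟩, h3⟩
    have := Finset.card_pos.2 ⟨k, hm⟩
    omega

lemma cD_succ_of_mem (D : Set ℕ) {k : ℕ} (hk : 1 ≤ k) (h : k ∈ D) :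
    cD D (k + 1) = cD D k + 1 := by
  have h1 : cD D (k+1) = cD D k + (k + 1 - k) := by
    apply (cD_eq_iff D hk (by omega)).2
    intro m hm1 hm2
    have : m = k := by omega
    rwa [this]
  omega

lemma cD_succ_of_not_mem (D : Set ℕ) {k : ℕ} (hk : 1 ≤ k) (h : k ∉ D) :
    cD D (k + 1) = cD D k := by
  have h1 := cD_mono D hk (by omega : k ≤ k + 1)
  have h2 := cD_le_add D hk (by omega : k ≤ k + 1)
  by_contra hne
  have h3 : cD D (k+1) = cD D k + (k + 1 - k) := by omega
  exact h ((cD_eq_iff D hk (by omega)).1 h3 k (le_refl k) (by omega))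

lemma gD_eq_iff (D : Set ℕ) {i j : ℕ} (hi : 1 ≤ i) (hij : i ≤ j) :
    gD D i = gD D j ↔ cD D j = cD D i + (j - i) := by
  unfold gD
  have h1 := cD_mono D hi hij
  have h2 := cD_le_add D hi hij
  have h3 := cD_lt D hi
  have h4 := cD_lt D (le_trans hi hij)
  omega

lemma gD_mono (D : Set ℕ) {i j : ℕ} (hi : 1 ≤ i) (hij : i ≤ j) : gD D i ≤ gD D j := by
  unfold gD
  have h2 := cD_le_add D hi hij
  have h3 := cD_lt D hi
  omega

/-- Comparator for the minimal word: sort by `gD` ascending, ties broken descending. -/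
noncomputable def leWm (D : Set ℕ) (a b : ℕ) : Bool :=
  decide (gD D a < gD D b ∨ (gD D a = gD D b ∧ b ≤ a))

/-- Comparator for the maximal word: sort by `cD` descending, ties broken ascending. -/
noncomputable def leWM (D : Set ℕ) (a b : ℕ) : Bool :=
  decide (cD D b < cD D a ∨ (cD D a = cD D b ∧ a ≤ b))

/-- The minimal word of the descent class. -/
noncomputable def mWord (n : ℕ) (D : Set ℕ) : List ℕ := (List.range' 1 n).mergeSort (leWm D)

/-- The maximal word of the descent class. -/
noncomputable def MWord (n : ℕ) (D : Set ℕ) : List ℕ := (List.range' 1 n).mergeSort (leWM D)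

lemma mWord_isPermWord (n : ℕ) (D : Set ℕ) : IsPermWord n (mWord n D) :=
  List.mergeSort_perm _ _

lemma MWord_isPermWord (n : ℕ) (D : Set ℕ) : IsPermWord n (MWord n D) :=
  List.mergeSort_perm _ _

lemma mem_of_permWord {n : ℕ} {σ : List ℕ} (h : IsPermWord n σ) {x : ℕ} :
    x ∈ σ ↔ 1 ≤ x ∧ x ≤ n := by
  rw [h.mem_iff, List.mem_range'_1]
  omega

lemma mWord_sorted (n : ℕ) (D : Set ℕ) : (mWord n D).Pairwise (leWm D · ·) := by
  apply List.pairwise_mergeSort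
  · intro a b c hab hbc
    simp only [leWm, decide_eq_true_eq] at *
    omega
  · intro a b
    simp only [leWm, Bool.or_eq_true, decide_eq_true_eq]
    omega

lemma MWord_sorted (n : ℕ) (D : Set ℕ) : (MWord n D).Pairwise (leWM D · ·) := by
  apply List.pairwise_mergeSort
  · intro a b c hab hbc
    simp only [leWM, decide_eq_true_eq] at *
    omega
  · intro a b
    simp only [leWM, Bool.or_eq_true, decide_eq_true_eq]
    omega

lemma sorted_idx_lt {le : ℕ → ℕ → Bool} {l : List ℕ} (hs : l.Pairwise (le · ·))
    {x y : ℕ} (hx : x ∈ l) (hy : y ∈ l) (hxy : x ≠ y)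
    (h : le y x = false) : l.idxOf x < l.idxOf y := by
  have hxl : l.idxOf x < l.length := List.idxOf_lt_length_iff.2 hx
  have hyl : l.idxOf y < l.length := List.idxOf_lt_length_iff.2 hy
  have hne : l.idxOf x ≠ l.idxOf y := fun he => hxy ((List.idxOf_inj hx).1 he)
  rcases lt_or_gt_of_ne hne with hlt | hgt
  · exact hlt
  · exfalso
    have := List.pairwise_iff_getElem.1 hs _ _ hyl hxl hgt
    rw [List.getElem_idxOf hyl, List.getElem_idxOf hxl, h] at this
    exact Bool.false_ne_true this

lemma mWord_idx_iff (n : ℕ) (D : Set ℕ) {i j : ℕ} (hi : 1 ≤ i) (hij : i < j) (hj : j ≤ n) :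
    (mWord n D).idxOf j < (mWord n D).idxOf i ↔ gD D i = gD D j := by
  have hiM : i ∈ mWord n D := (mem_of_permWord (mWord_isPermWord n D)).2 ⟨hi, by omega⟩
  have hjM : j ∈ mWord n D := (mem_of_permWord (mWord_isPermWord n D)).2 ⟨by omega, hj⟩
  have hgm := gD_mono D hi (le_of_lt hij)
  constructor
  · intro h
    by_contra hne
    have hlt : gD D i < gD D j := by omega
    have : leWm D j i = false := by
      simp only [leWm, decide_eq_false_iff_not]
      omega
    have := sorted_idx_lt (mWord_sorted n D) hiM hjM (by omega) this
    omega
  · intro hg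
    have hfalse : leWm D i j = false := by
      simp only [leWm, decide_eq_false_iff_not]
      omega
    exact sorted_idx_lt (mWord_sorted n D) hjM hiM (by omega) hfalse

lemma MWord_idx_iff (n : ℕ) (D : Set ℕ) {i j : ℕ} (hi : 1 ≤ i) (hij : i < j) (hj : j ≤ n) :
    (MWord n D).idxOf j < (MWord n D).idxOf i ↔ cD D i < cD D j := by
  have hiM : i ∈ MWord n D := (mem_of_permWord (MWord_isPermWord n D)).2 ⟨hi, by omega⟩
  have hjM : j ∈ MWord n D := (mem_of_permWord (MWord_isPermWord n D)).2 ⟨by omega, hj⟩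
  have hcm := cD_mono D hi (le_of_lt hij)
  constructor
  · intro h
    by_contra hne
    have heq : cD D i = cD D j := by omega
    have : leWM D j i = false := by
      simp only [leWM, decide_eq_false_iff_not]
      omega
    have := sorted_idx_lt (MWord_sorted n D) hiM hjM (by omega) this
    omega
  · intro hc
    have hfalse : leWM D i j = false := by
      simp only [leWM, decide_eq_false_iff_not]
      omega
    exact sorted_idx_lt (MWord_sorted n D) hjM hiM (by omega) hfalse

lemma des_iff_inv (u : List ℕ) (i : ℕ) : i ∈ DesLW u ↔ (i, i + 1) ∈ InvW u := by
  constructor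
  · rintro ⟨a, b, c⟩
    exact ⟨(by omega : i < i + 1), a, b, c⟩
  · rintro ⟨_, a, b, c⟩
    exact ⟨a, b, c⟩

lemma desLW_mWord (n : ℕ) (D : Set ℕ) (hD : D ⊆ Set.Icc 1 (n - 1)) :
    DesLW (mWord n D) = D := by
  ext i
  constructor
  · rintro ⟨hi, hi1, hidx⟩
    rw [mem_of_permWord (mWord_isPermWord n D)] at hi hi1
    have h1 : 1 ≤ i := hi.1
    have hg : gD D i = gD D (i + 1) :=
      (mWord_idx_iff n D h1 ((by omega : i < i + 1)) hi1.2).1 hidx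
    have hc : cD D (i + 1) = cD D i + 1 := by
      have := (gD_eq_iff D h1 (by omega)).1 hg
      omega
    by_contra hni
    have := cD_succ_of_not_mem D h1 hni
    omega
  · intro hiD
    rcases hD hiD with ⟨h1, h2⟩
    have hn : 1 ≤ n - 1 := le_trans h1 h2
    have hi1n : i + 1 ≤ n := by omega
    have hc := cD_succ_of_mem D h1 hiD
    have hg : gD D i = gD D (i + 1) := (gD_eq_iff D h1 (by omega)).2 (by omega)
    refine ⟨?_, ?_, (mWord_idx_iff n D h1 ((by omega : i < i + 1)) hi1n).2 hg⟩
    · exact (mem_of_permWord (mWord_isPermWord n D)).2 ⟨h1, by omega⟩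
    · exact (mem_of_permWord (mWord_isPermWord n D)).2 ⟨by omega, hi1n⟩

lemma desLW_MWord (n : ℕ) (D : Set ℕ) (hD : D ⊆ Set.Icc 1 (n - 1)) :
    DesLW (MWord n D) = D := by
  ext i
  constructor
  · rintro ⟨hi, hi1, hidx⟩
    rw [mem_of_permWord (MWord_isPermWord n D)] at hi hi1
    have h1 : 1 ≤ i := hi.1
    have hc : cD D i < cD D (i + 1) :=
      (MWord_idx_iff n D h1 ((by omega : i < i + 1)) hi1.2).1 hidx
    by_contra hni
    have := cD_succ_of_not_mem D h1 hni
    omega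
  · intro hiD
    rcases hD hiD with ⟨h1, h2⟩
    have hn : 1 ≤ n - 1 := le_trans h1 h2
    have hi1n : i + 1 ≤ n := by omega
    have hc := cD_succ_of_mem D h1 hiD
    refine ⟨?_, ?_, (MWord_idx_iff n D h1 ((by omega : i < i + 1)) hi1n).2 (by omega)⟩
    · exact (mem_of_permWord (MWord_isPermWord n D)).2 ⟨h1, by omega⟩
    · exact (mem_of_permWord (MWord_isPermWord n D)).2 ⟨by omega, hi1n⟩

lemma idx_lt_of_run {n : ℕ} {σ : List ℕ} (h : IsPermWord n σ) {i : ℕ} (hi : 1 ≤ i) :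
    ∀ j, i < j → j ≤ n →
    (∀ k, i ≤ k → k < j → k ∈ DesLW σ) → σ.idxOf j < σ.idxOf i := by
  intro j
  induction j with
  | zero => omega
  | succ j ih =>
    intro hij hj hrun
    rcases Nat.lt_or_ge i j with hlt | hge
    · have hstep : j ∈ DesLW σ := hrun j (by omega) (by omega)
      have h2 := hstep.2.2
      have := ih hlt (by omega) (fun k hk1 hk2 => hrun k hk1 (by omega))
      omega
    · have : i = j := by omega
      subst this
      exact (hrun i (le_refl i) (by omega)).2.2

lemma idx_le_of_norun {n : ℕ} {σ : List ℕ} (h : IsPermWord n σ) {i : ℕ} (hi : 1 ≤ i) :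
    ∀ j, i ≤ j → j ≤ n →
    (∀ k, i ≤ k → k < j → k ∉ DesLW σ) → σ.idxOf i ≤ σ.idxOf j := by
  intro j
  induction j with
  | zero =>
    intro hij _ _
    have : i = 0 := by omega
    omega
  | succ j ih =>
    intro hij hj hno
    rcases Nat.lt_or_ge j i with hlt | hge
    · have : i = j + 1 := by omega
      subst this
      omega
    · have hih := ih hge (by omega) (fun k hk1 hk2 => hno k hk1 (by omega))
      have hjmem : j ∈ σ := (mem_of_permWord h).2 ⟨by omega, by omega⟩
      have hj1mem : j + 1 ∈ σ := (mem_of_permWord h).2 ⟨by omega, hj⟩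
      have hnd : j ∉ DesLW σ := hno j hge (by omega)
      have hle : σ.idxOf j ≤ σ.idxOf (j + 1) := by
        by_contra hcon
        exact hnd ⟨hjmem, hj1mem, by omega⟩
      omega

end DescentAux

/-- For every `D ⊆ [n-1]`, the descent class
`{σ ∈ Sₙ : Des_L(σ) = D}` is an interval in the right weak Bruhat order: it has a
minimum `m` and a maximum `M`, and it equals `{σ : m ≤ σ ≤ M}` in the weak order
(`u ≤ w` iff `Inv_L(u) ⊆ Inv_L(w)`). -/
theorem descent_class_is_weak_order_interval (n : ℕ) (D : Set ℕ)
    (hD : D ⊆ Set.Icc 1 (n - 1)) :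
    ∃ m M : List ℕ, IsPermWord n m ∧ IsPermWord n M ∧ DesLW m = D ∧ DesLW M = D ∧
      ∀ σ : List ℕ, IsPermWord n σ →
        (DesLW σ = D ↔ InvW m ⊆ InvW σ ∧ InvW σ ⊆ InvW M) := by
  refine ⟨mWord n D, MWord n D, mWord_isPermWord n D, MWord_isPermWord n D,
    desLW_mWord n D hD, desLW_MWord n D hD, ?_⟩
  intro σ hσ
  constructor
  · intro hdes
    constructor
    · rintro ⟨i, j⟩ ⟨hij, hi, hj, hidx⟩
      rw [mem_of_permWord (mWord_isPermWord n D)] at hi hj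
      have h1 : 1 ≤ i := hi.1
      have hjn : j ≤ n := hj.2
      have hg : gD D i = gD D j := (mWord_idx_iff n D h1 hij hjn).1 hidx
      have hrun : ∀ k, i ≤ k → k < j → k ∈ D :=
        (cD_eq_iff D h1 (le_of_lt hij)).1 ((gD_eq_iff D h1 (le_of_lt hij)).1 hg)
      have hrun' : ∀ k, i ≤ k → k < j → k ∈ DesLW σ := by
        intro k hk1 hk2
        rw [hdes]
        exact hrun k hk1 hk2
      refine ⟨hij, (mem_of_permWord hσ).2 hi, (mem_of_permWord hσ).2 hj, ?_⟩
      exact idx_lt_of_run hσ h1 j hij hjn hrun'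
    · rintro ⟨i, j⟩ ⟨hij, hi, hj, hidx⟩
      rw [mem_of_permWord hσ] at hi hj
      have h1 : 1 ≤ i := hi.1
      have hjn : j ≤ n := hj.2
      have hex : ∃ k, i ≤ k ∧ k < j ∧ k ∈ D := by
        by_contra hcon
        push_neg at hcon
        have hno : ∀ k, i ≤ k → k < j → k ∉ DesLW σ := by
          intro k hk1 hk2 hkd
          rw [hdes] at hkd
          exact hcon k hk1 hk2 hkd
        have hfin : σ.idxOf i ≤ σ.idxOf j := idx_le_of_norun hσ h1 j (le_of_lt hij) hjn hno
        have hidx' : σ.idxOf j < σ.idxOf i := hidx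
        omega
      have hc : cD D i < cD D j := (cD_lt_iff D h1 (le_of_lt hij)).2 hex
      refine ⟨hij, (mem_of_permWord (MWord_isPermWord n D)).2 hi,
        (mem_of_permWord (MWord_isPermWord n D)).2 hj, ?_⟩
      exact (MWord_idx_iff n D h1 hij hjn).2 hc
  · rintro ⟨h1, h2⟩
    ext i
    constructor
    · intro hides
      have : (i, i + 1) ∈ InvW (MWord n D) := h2 ((des_iff_inv σ i).1 hides)
      have : i ∈ DesLW (MWord n D) := (des_iff_inv _ i).2 this
      rwa [desLW_MWord n D hD] at this
    · intro hiD
      have : i ∈ DesLW (mWord n D) := by rw [desLW_mWord n D hD]; exact hiD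
      have : (i, i + 1) ∈ InvW σ := h1 ((des_iff_inv _ i).1 this)
      exact (des_iff_inv σ i).2 this
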